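/- For connected graphs G1 and G2, the sorting number of their Cartesian product satisfies st(G1 × G2) ≤ st(G1)·st(G2) + st(G1) + st(G2). -/

import Mathlib

/-- A stage of a sorting network on vertex set `V`: `partner` is an involution whose
non-fixed pairs form the matched edges; a matched edge either always swaps the two
pebbles (`swapAlways`) or is a directed comparator, directed towards the endpoint
marked by `lo`, which receives the smaller pebble. -/
structure SortStep (V : Type*) where
  partner : V → V
  swapAlways : V → Bool
  lo : V → Bool

/-- Well-formedness of a stage with respect to the graph `G`: `partner` is an
involutive matching of `G`, the `swapAlways` flag is consistent on a matched edge, and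
every directed comparator has exactly one endpoint marked as lower. -/
def SortStep.WF {V : Type*} (G : SimpleGraph V) (s : SortStep V) : Prop :=
  (∀ v, s.partner (s.partner v) = v) ∧
  (∀ v, s.partner v ≠ v → G.Adj v (s.partner v)) ∧
  (∀ v, s.partner v ≠ v → s.swapAlways v = s.swapAlways (s.partner v)) ∧
  (∀ v, s.partner v ≠ v → s.swapAlways v = false → s.lo v = !s.lo (s.partner v))

/-- Apply one stage to an arrangement `x` of values on the vertices. -/
def SortStep.apply {V : Type*} [DecidableEq V] {α : Type*} [LinearOrder α]
    (s : SortStep V) (x : V → α) : V → α := fun v =>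
  if s.partner v = v then x v
  else if s.swapAlways v then x (s.partner v)
  else if s.lo v then min (x v) (x (s.partner v))
  else max (x v) (x (s.partner v))

/-- Apply a sequence of stages to an initial arrangement. -/
def applyNetwork {V : Type*} [DecidableEq V] {α : Type*} [LinearOrder α]
    (M : List (SortStep V)) (x : V → α) : V → α :=
  M.foldl (fun y s => s.apply y) x

/-- `M` is a sorting network on `G` with sorted ordering given by the injective
ranking `rk`: for every initial arrangement, the final arrangement is sorted
according to `rk`. -/
def IsSortingNetwork {V : Type*} [DecidableEq V] (G : SimpleGraph V)
    (M : List (SortStep V)) (rk : V → ℕ) : Prop :=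
  Function.Injective rk ∧ (∀ s ∈ M, s.WF G) ∧
    ∀ x : V → ℕ, ∀ u v, rk u ≤ rk v → applyNetwork M x u ≤ applyNetwork M x v

/-- `st(G, π)`: the minimum depth of a sorting network on `G` with the fixed
sorted ordering `rk`. -/
noncomputable def sortingNumberOrd {V : Type*} [DecidableEq V] (G : SimpleGraph V)
    (rk : V → ℕ) : ℕ :=
  sInf {k | ∃ M : List (SortStep V), M.length = k ∧ IsSortingNetwork G M rk}

/-- The sorting number `st(G)`: the minimum depth of a sorting network on `G`,
over all sorted orderings. -/
noncomputable def sortingNumber {V : Type*} [DecidableEq V] (G : SimpleGraph V) : ℕ :=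
  sInf {k | ∃ (M : List (SortStep V)) (rk : V → ℕ), M.length = k ∧ IsSortingNetwork G M rk}

section Util

variable {V : Type*} [DecidableEq V]

lemma applyNetwork_cons {α : Type*} [LinearOrder α] (s : SortStep V) (M : List (SortStep V))
    (x : V → α) : applyNetwork (s :: M) x = applyNetwork M (s.apply x) := rfl

lemma applyNetwork_append {α : Type*} [LinearOrder α] (M N : List (SortStep V))
    (x : V → α) : applyNetwork (M ++ N) x = applyNetwork N (applyNetwork M x) := by
  simp [applyNetwork, List.foldl_append]

/-- apply stays within a bound, on a partner-closed set. -/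
lemma SortStep.apply_bound_on (s : SortStep V) (x : V → ℕ) (T : Set V)
    (hT : ∀ v ∈ T, s.partner v ∈ T) (B : ℕ) (hx : ∀ v ∈ T, x v ≤ B) :
    ∀ v ∈ T, s.apply x v ≤ B := by
  intro v hv
  unfold SortStep.apply
  split_ifs
  · exact hx v hv
  · exact hx _ (hT v hv)
  · exact le_trans (min_le_left _ _) (hx v hv)
  · exact max_le (hx v hv) (hx _ (hT v hv))

lemma applyNetwork_bound_on (M : List (SortStep V)) (T : Set V) (B : ℕ) :
    ∀ x : V → ℕ, (∀ s ∈ M, ∀ v ∈ T, s.partner v ∈ T) → (∀ v ∈ T, x v ≤ B) →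
    ∀ v ∈ T, applyNetwork M x v ≤ B := by
  induction M with
  | nil => exact fun x _ hx => hx
  | cons s M ih =>
    intro x hT hx
    rw [applyNetwork_cons]
    exact ih _ (fun t ht => hT t (List.mem_cons_of_mem _ ht))
      (s.apply_bound_on x T (hT s (List.mem_cons_self)) B hx)


lemma SortStep.apply_bound (s : SortStep V) (x : V → ℕ) (B : ℕ) (hx : ∀ v, x v ≤ B) :
    ∀ v, s.apply x v ≤ B := fun v =>
  s.apply_bound_on x Set.univ (fun v _ => trivial) B (fun v _ => hx v) v trivial

lemma applyNetwork_bound (M : List (SortStep V)) (x : V → ℕ) (B : ℕ) (hx : ∀ v, x v ≤ B) :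
    ∀ v, applyNetwork M x v ≤ B := fun v =>
  applyNetwork_bound_on M Set.univ B x (fun _ _ v _ => trivial) (fun v _ => hx v) v trivial

/-- untouched vertices keep their value -/
lemma SortStep.apply_fixed (s : SortStep V) (x : V → ℕ) (v : V) (h : s.partner v = v) :
    s.apply x v = x v := by simp [SortStep.apply, h]

lemma applyNetwork_fixed (M : List (SortStep V)) (x : V → ℕ) (v : V)
    (h : ∀ s ∈ M, s.partner v = v) : applyNetwork M x v = x v := by
  induction M generalizing x with
  | nil => rfl
  | cons s M ih =>
    rw [applyNetwork_cons, ih _ (fun t ht => h t (List.mem_cons_of_mem _ ht)),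
      s.apply_fixed x v (h s (List.mem_cons_self))]

/-- monotone maps commute with apply -/
lemma SortStep.apply_comp_mono (s : SortStep V) (f : ℕ → ℕ) (hf : Monotone f) (x : V → ℕ) :
    s.apply (fun v => f (x v)) = fun v => f (s.apply x v) := by
  funext v
  unfold SortStep.apply
  split_ifs <;> simp [hf.map_min, hf.map_max]

lemma applyNetwork_comp_mono (M : List (SortStep V)) (f : ℕ → ℕ) (hf : Monotone f)
    (x : V → ℕ) : applyNetwork M (fun v => f (x v)) = fun v => f (applyNetwork M x v) := by
  induction M generalizing x with
  | nil => rfl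
  | cons s M ih => rw [applyNetwork_cons, s.apply_comp_mono f hf, ih, applyNetwork_cons]

/-- The 0-1 principle. -/
lemma zeroOne_principle (M : List (SortStep V)) (rk : V → ℕ)
    (h01 : ∀ x : V → ℕ, (∀ v, x v ≤ 1) → ∀ u v, rk u ≤ rk v →
      applyNetwork M x u ≤ applyNetwork M x v) :
    ∀ x : V → ℕ, ∀ u v, rk u ≤ rk v → applyNetwork M x u ≤ applyNetwork M x v := by
  intro x u v huv
  by_contra hlt
  push_neg at hlt
  set f : ℕ → ℕ := fun t => if applyNetwork M x u ≤ t then 1 else 0 with hf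
  have hfm : Monotone f := by
    intro a b hab
    simp only [hf]
    split_ifs with h1 h2 h2
    · exact le_refl _
    · exact absurd (le_trans h1 hab) h2
    · exact Nat.zero_le _
    · exact le_refl _
  have hx1 : ∀ w, f (x w) ≤ 1 := by
    intro w; simp only [hf]; split_ifs <;> omega
  have := h01 (fun w => f (x w)) hx1 u v huv
  rw [applyNetwork_comp_mono M f hfm x] at this
  simp only [hf] at this
  rw [if_pos (le_refl _), if_neg (by omega)] at this
  omega

end Util

section Sum

variable {V : Type*} [DecidableEq V]

lemma SortStep.apply_eval_swap {α : Type*} [LinearOrder α] (s : SortStep V) (x : V → α) (v : V)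
    (h : s.partner v ≠ v) (hs : s.swapAlways v = true) :
    s.apply x v = x (s.partner v) := by
  simp [SortStep.apply, h, hs]

lemma SortStep.apply_eval_min {α : Type*} [LinearOrder α] (s : SortStep V) (x : V → α) (v : V)
    (h : s.partner v ≠ v) (hs : s.swapAlways v = false) (hl : s.lo v = true) :
    s.apply x v = min (x v) (x (s.partner v)) := by
  simp [SortStep.apply, h, hs, hl]

lemma SortStep.apply_eval_max {α : Type*} [LinearOrder α] (s : SortStep V) (x : V → α) (v : V)
    (h : s.partner v ≠ v) (hs : s.swapAlways v = false) (hl : s.lo v = false) :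
    s.apply x v = max (x v) (x (s.partner v)) := by
  simp [SortStep.apply, h, hs, hl]

/-- pointwise pair-sum preservation -/
lemma SortStep.apply_add_partner (s : SortStep V)
    (hinv : ∀ v, s.partner (s.partner v) = v)
    (hsw : ∀ v, s.partner v ≠ v → s.swapAlways v = s.swapAlways (s.partner v))
    (hlo : ∀ v, s.partner v ≠ v → s.swapAlways v = false → s.lo v = !s.lo (s.partner v))
    (x : V → ℕ) (v : V) :
    s.apply x v + s.apply x (s.partner v) = x v + x (s.partner v) := by
  by_cases h : s.partner v = v
  · rw [h, s.apply_fixed x v h]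
  · have hp : s.partner (s.partner v) ≠ s.partner v := by
      rw [hinv v]; exact fun he => h he.symm
    by_cases hs : s.swapAlways v = true
    · have hs2 : s.swapAlways (s.partner v) = true := (hsw v h) ▸ hs
      rw [s.apply_eval_swap x v h hs, s.apply_eval_swap x _ hp hs2, hinv v, Nat.add_comm]
    · have hs' : s.swapAlways v = false := by simpa using hs
      have hs2 : s.swapAlways (s.partner v) = false := (hsw v h) ▸ hs'
      have hl := hlo v h hs'
      by_cases hl1 : s.lo v = true
      · have hl2 : s.lo (s.partner v) = false := by
          rw [hl1] at hl; simpa using hl.symm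
        rw [s.apply_eval_min x v h hs' hl1, s.apply_eval_max x _ hp hs2 hl2, hinv v]
        omega
      · have hl1' : s.lo v = false := by simpa using hl1
        have hl2 : s.lo (s.partner v) = true := by
          rw [hl1'] at hl; simpa using hl.symm
        rw [s.apply_eval_max x v h hs' hl1', s.apply_eval_min x _ hp hs2 hl2, hinv v]
        omega

/-- sum preservation over a partner-closed finset -/
lemma SortStep.sum_apply (s : SortStep V)
    (hinv : ∀ v, s.partner (s.partner v) = v)
    (hsw : ∀ v, s.partner v ≠ v → s.swapAlways v = s.swapAlways (s.partner v))
    (hlo : ∀ v, s.partner v ≠ v → s.swapAlways v = false → s.lo v = !s.lo (s.partner v))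
    (F : Finset V) (hF : ∀ v ∈ F, s.partner v ∈ F)
    (x : V → ℕ) : ∑ v ∈ F, s.apply x v = ∑ v ∈ F, x v := by
  have reindex : ∀ f : V → ℕ, ∑ v ∈ F, f (s.partner v) = ∑ v ∈ F, f v := by
    intro f
    refine Finset.sum_nbij' (fun v => s.partner v) (fun v => s.partner v) ?_ ?_ ?_ ?_ ?_
    · exact fun a ha => hF a ha
    · exact fun a ha => hF a ha
    · exact fun a _ => hinv a
    · exact fun a _ => hinv a
    · exact fun a _ => rfl
  have key : ∑ v ∈ F, (s.apply x v + s.apply x (s.partner v)) =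
      ∑ v ∈ F, (x v + x (s.partner v)) :=
    Finset.sum_congr rfl (fun v _ => s.apply_add_partner hinv hsw hlo x v)
  rw [Finset.sum_add_distrib, Finset.sum_add_distrib, reindex, reindex] at key
  omega

end Sum

section Pattern

variable {W : Type*} [Fintype W] [DecidableEq W]

/-- compressed rank -/
def crank (rk : W → ℕ) (v : W) : ℕ := (Finset.univ.filter fun u => rk u < rk v).card

/-- ascending 0-1 pattern with `z` ones -/
def pat (rk : W → ℕ) (z : ℕ) : W → ℕ :=
  fun v => if Fintype.card W - z ≤ crank rk v then 1 else 0

/-- descending 0-1 pattern with `z` ones -/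
def dpat (rk : W → ℕ) (z : ℕ) : W → ℕ :=
  fun v => if crank rk v < z then 1 else 0

variable (rk : W → ℕ) (hrk : Function.Injective rk)

lemma crank_lt_card (v : W) : crank rk v < Fintype.card W := by
  have hsub : (Finset.univ.filter fun u => rk u < rk v) ⊆ Finset.univ.erase v := by
    intro u hu
    rw [Finset.mem_filter] at hu
    refine Finset.mem_erase.2 ⟨fun he => ?_, Finset.mem_univ u⟩
    subst he; exact lt_irrefl _ hu.2
  calc crank rk v ≤ (Finset.univ.erase v).card := Finset.card_le_card hsub
    _ < Fintype.card W := by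
        rw [Finset.card_erase_of_mem (Finset.mem_univ v), Finset.card_univ]
        have : 0 < Fintype.card W := Fintype.card_pos_iff.2 ⟨v⟩
        omega

lemma crank_lt_crank {u v : W} (h : rk u < rk v) : crank rk u < crank rk v := by
  apply Finset.card_lt_card
  rw [Finset.ssubset_iff_of_subset]
  · exact ⟨u, Finset.mem_filter.2 ⟨Finset.mem_univ u, h⟩,
      fun hu => lt_irrefl _ (Finset.mem_filter.1 hu).2⟩
  · intro w hw
    rw [Finset.mem_filter] at hw ⊢
    exact ⟨hw.1, lt_trans hw.2 h⟩

include hrk in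
lemma crank_inj : Function.Injective (crank rk) := by
  intro u v h
  by_contra hne
  rcases lt_trichotomy (rk u) (rk v) with hc | hc | hc
  · exact absurd h (Nat.ne_of_lt (crank_lt_crank rk hc))
  · exact hne (hrk hc)
  · exact absurd h.symm (Nat.ne_of_lt (crank_lt_crank rk hc))

include hrk in
lemma crank_le_of_le {u v : W} (h : rk u ≤ rk v) : crank rk u ≤ crank rk v := by
  rcases eq_or_lt_of_le h with he | hl
  · rw [hrk he]
  · exact le_of_lt (crank_lt_crank rk hl)

include hrk in
/-- sums over W of functions of crank equal sums over range C -/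
lemma sum_crank (g : ℕ → ℕ) :
    ∑ v : W, g (crank rk v) = ∑ k ∈ Finset.range (Fintype.card W), g k := by
  have himg : Finset.image (crank rk) Finset.univ = Finset.range (Fintype.card W) := by
    apply Finset.eq_of_subset_of_card_le
    · intro k hk
      rw [Finset.mem_image] at hk
      obtain ⟨v, _, hv⟩ := hk
      rw [Finset.mem_range, ← hv]
      exact crank_lt_card rk v
    · rw [Finset.card_range, Finset.card_image_of_injective _ (crank_inj rk hrk),
        Finset.card_univ]
  rw [← himg, Finset.sum_image (fun x _ y _ h => crank_inj rk hrk h)]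

lemma count_range (C a b : ℕ) :
    (∑ k ∈ Finset.range C, if a ≤ k ∧ k < b then (1:ℕ) else 0) = min b C - a := by
  induction C with
  | zero => simp
  | succ C ih =>
    rw [Finset.sum_range_succ, ih]
    split_ifs <;> omega

include hrk in
lemma sum_pat {z : ℕ} (hz : z ≤ Fintype.card W) : ∑ v : W, pat rk z v = z := by
  unfold pat
  rw [sum_crank rk hrk (fun k => if Fintype.card W - z ≤ k then 1 else 0)]
  have hcong : (∑ k ∈ Finset.range (Fintype.card W), if Fintype.card W - z ≤ k then (1:ℕ) else 0)
      = ∑ k ∈ Finset.range (Fintype.card W),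
        if Fintype.card W - z ≤ k ∧ k < Fintype.card W then (1:ℕ) else 0 := by
    apply Finset.sum_congr rfl
    intro k hk
    rw [Finset.mem_range] at hk
    split_ifs <;> omega
  rw [hcong, count_range]
  omega

include hrk in
lemma sum_dpat {z : ℕ} (hz : z ≤ Fintype.card W) : ∑ v : W, dpat rk z v = z := by
  unfold dpat
  rw [sum_crank rk hrk (fun k => if k < z then 1 else 0)]
  have hcong : (∑ k ∈ Finset.range (Fintype.card W), if k < z then (1:ℕ) else 0)
      = ∑ k ∈ Finset.range (Fintype.card W), if 0 ≤ k ∧ k < z then (1:ℕ) else 0 := by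
    apply Finset.sum_congr rfl
    intro k _
    split_ifs <;> omega
  rw [hcong, count_range]
  omega

include hrk in
/-- count of pointwise min of an ascending and a descending pattern -/
lemma sum_min_pat_dpat {z1 z2 : ℕ} (h1 : z1 ≤ Fintype.card W) (h2 : z2 ≤ Fintype.card W) :
    ∑ v : W, min (pat rk z1 v) (dpat rk z2 v) = z1 + z2 - Fintype.card W := by
  unfold pat dpat
  rw [sum_crank rk hrk
    (fun k => min (if Fintype.card W - z1 ≤ k then 1 else 0) (if k < z2 then 1 else 0))]
  have hpt : ∀ k, min (if Fintype.card W - z1 ≤ k then (1:ℕ) else 0) (if k < z2 then 1 else 0)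
      = if Fintype.card W - z1 ≤ k ∧ k < z2 then 1 else 0 := by
    intro k; split_ifs <;> omega
  simp only [hpt]
  rw [count_range]
  omega

include hrk in
lemma sum_max_dpat_pat {z1 z2 : ℕ} (h1 : z1 ≤ Fintype.card W) (h2 : z2 ≤ Fintype.card W) :
    ∑ v : W, max (dpat rk z1 v) (pat rk z2 v) = min (Fintype.card W) (z1 + z2) := by
  have key : ∑ v : W, (min (pat rk z2 v) (dpat rk z1 v) + max (dpat rk z1 v) (pat rk z2 v))
      = ∑ v : W, (dpat rk z1 v + pat rk z2 v) := by
    apply Finset.sum_congr rfl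
    intro v _
    unfold pat dpat
    split_ifs <;> omega
  rw [Finset.sum_add_distrib, Finset.sum_add_distrib, sum_min_pat_dpat rk hrk h2 h1,
    sum_dpat rk hrk h1, sum_pat rk hrk h2] at key
  omega

omit hrk in
/-- a monotone 0-1 arrangement is the ascending pattern of its count -/
lemma sorted01_eq_pat (y : W → ℕ) (hy : ∀ v, y v ≤ 1)
    (hmono : ∀ u v, rk u ≤ rk v → y u ≤ y v) (v : W) :
    y v = pat rk (∑ u, y u) v := by
  set z := ∑ u, y u with hz
  have hub : ∀ (T : Finset W), (∀ u ∈ T, y u = 1) → T.card ≤ z := by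
    intro T hT
    calc T.card = ∑ u ∈ T, y u := by
          rw [Finset.sum_congr rfl hT]; simp
      _ ≤ z := Finset.sum_le_sum_of_subset (Finset.subset_univ T)
  have hcard_ge : (Finset.univ.filter fun u => ¬ rk u < rk v).card
      = Fintype.card W - crank rk v := by
    rw [Finset.filter_not, Finset.card_sdiff_of_subset (Finset.filter_subset _ _)]
    rw [Finset.card_univ]; rfl
  rcases Nat.le_one_iff_eq_zero_or_eq_one.1 (hy v) with h0 | h1
  · -- y v = 0 : pattern must be 0 there
    have hsubset : (Finset.univ.filter fun u => y u = 1) ⊆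
        (Finset.univ.filter fun u => rk v < rk u) := by
      intro u hu
      rw [Finset.mem_filter] at hu ⊢
      refine ⟨Finset.mem_univ u, ?_⟩
      by_contra hle
      push_neg at hle
      have := hmono u v hle
      omega
    have hzle : z ≤ (Finset.univ.filter fun u => rk v < rk u).card := by
      have : z = ∑ u ∈ (Finset.univ.filter fun u => y u = 1), y u := by
        rw [hz]
        rw [Finset.sum_filter_of_ne]
        intro u _ hne
        rcases Nat.le_one_iff_eq_zero_or_eq_one.1 (hy u) with h | h
        · exact absurd h hne
        · exact h
      rw [this]
      calc ∑ u ∈ (Finset.univ.filter fun u => y u = 1), y u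
          ≤ ∑ u ∈ (Finset.univ.filter fun u => rk v < rk u), y u :=
            Finset.sum_le_sum_of_subset hsubset
        _ ≤ ∑ u ∈ (Finset.univ.filter fun u => rk v < rk u), 1 :=
            Finset.sum_le_sum (fun u _ => hy u)
        _ = (Finset.univ.filter fun u => rk v < rk u).card := by simp
    have hlt : (Finset.univ.filter fun u => rk v < rk u).card
        ≤ Fintype.card W - crank rk v - 1 := by
      have hsub2 : (Finset.univ.filter fun u => rk v < rk u) ⊆
          (Finset.univ.filter fun u => ¬ rk u < rk v).erase v := by
        intro u hu
        rw [Finset.mem_filter] at hu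
        refine Finset.mem_erase.2 ⟨fun he => ?_, Finset.mem_filter.2 ⟨Finset.mem_univ u, ?_⟩⟩
        · subst he; exact lt_irrefl _ hu.2
        · omega
      calc (Finset.univ.filter fun u => rk v < rk u).card
          ≤ ((Finset.univ.filter fun u => ¬ rk u < rk v).erase v).card :=
            Finset.card_le_card hsub2
        _ = Fintype.card W - crank rk v - 1 := by
            rw [Finset.card_erase_of_mem, hcard_ge]
            exact Finset.mem_filter.2 ⟨Finset.mem_univ v, lt_irrefl _⟩
    have hcr : crank rk v < Fintype.card W := crank_lt_card rk v
    rw [h0, pat]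
    rw [if_neg]
    omega
  · -- y v = 1 : pattern must be 1 there
    have hsubset : (Finset.univ.filter fun u => ¬ rk u < rk v) ⊆
        (Finset.univ.filter fun u => y u = 1) := by
      intro u hu
      rw [Finset.mem_filter] at hu ⊢
      refine ⟨Finset.mem_univ u, ?_⟩
      have : rk v ≤ rk u := by omega
      have := hmono v u this
      have := hy u
      omega
    have := hub _ (fun u hu => (Finset.mem_filter.1 (hsubset hu)).2)
    rw [hcard_ge] at this
    rw [h1, pat, if_pos]
    omega

end Pattern

section Flip

variable {V : Type*} [DecidableEq V]

/-- reverse the direction of all comparators -/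
def SortStep.flip (s : SortStep V) : SortStep V :=
  ⟨s.partner, s.swapAlways, fun v => !s.lo v⟩

lemma SortStep.flip_partner (s : SortStep V) : s.flip.partner = s.partner := rfl

lemma SortStep.flip_apply01 (s : SortStep V) (x : V → ℕ) (hx : ∀ v, x v ≤ 1) :
    s.flip.apply x = fun v => 1 - s.apply (fun u => 1 - x u) v := by
  funext v
  by_cases h : s.partner v = v
  · rw [s.flip.apply_fixed x v h, s.apply_fixed _ v h]
    have := hx v; omega
  · by_cases hs : s.swapAlways v = true
    · rw [s.flip.apply_eval_swap x v h hs, s.apply_eval_swap _ v h hs]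
      have := hx (s.partner v); simp only [SortStep.flip]; omega
    · have hs' : s.swapAlways v = false := by simpa using hs
      by_cases hl : s.lo v = true
      · have hfl : s.flip.lo v = false := by simp [SortStep.flip, hl]
        rw [s.flip.apply_eval_max x v h hs' hfl, s.apply_eval_min _ v h hs' hl]
        have := hx v; have := hx (s.partner v)
        simp only [SortStep.flip]
        omega
      · have hl' : s.lo v = false := by simpa using hl
        have hfl : s.flip.lo v = true := by simp [SortStep.flip, hl']
        rw [s.flip.apply_eval_min x v h hs' hfl, s.apply_eval_max _ v h hs' hl']
        have := hx v; have := hx (s.partner v)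
        simp only [SortStep.flip]
        omega

lemma flipList_apply01 (M : List (SortStep V)) :
    ∀ x : V → ℕ, (∀ v, x v ≤ 1) →
    applyNetwork (M.map SortStep.flip) x
      = fun v => 1 - applyNetwork M (fun u => 1 - x u) v := by
  induction M with
  | nil =>
    intro x hx
    funext v
    simp only [applyNetwork, List.map_nil, List.foldl_nil]
    have := hx v; omega
  | cons s M ih =>
    intro x hx
    rw [List.map_cons, applyNetwork_cons, applyNetwork_cons]
    rw [s.flip_apply01 x hx]
    have h1 : ∀ u, s.apply (fun u => 1 - x u) u ≤ 1 :=
      s.apply_bound _ 1 (fun u => by omega)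
    rw [ih _ (fun u => by have := h1 u; omega)]
    funext v
    congr 1
    congr 1
    funext u
    have := h1 u
    omega

lemma SortStep.flip_wf {G : SimpleGraph V} (s : SortStep V) (h : s.WF G) : s.flip.WF G := by
  obtain ⟨h1, h2, h3, h4⟩ := h
  refine ⟨h1, h2, h3, fun v hv hs => ?_⟩
  have := h4 v hv hs
  simp only [SortStep.flip]
  rw [this]

end Flip

section Pour

variable {V : Type*} [DecidableEq V]

/-- abstract count dynamics of a step acting on sorted 0-1 rows of width `C` -/
def pourStep (C : ℕ) (s : SortStep V) (Z : V → ℕ) : V → ℕ := fun v =>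
  if s.partner v = v then Z v
  else if s.swapAlways v then Z (s.partner v)
  else if s.lo v then Z v + Z (s.partner v) - C
  else min C (Z v + Z (s.partner v))

def pourRun (C : ℕ) (L : List (SortStep V)) (Z : V → ℕ) : V → ℕ :=
  L.foldl (fun Z s => pourStep C s Z) Z

lemma pourRun_cons (C : ℕ) (s : SortStep V) (L : List (SortStep V)) (Z : V → ℕ) :
    pourRun C (s :: L) Z = pourRun C L (pourStep C s Z) := rfl

lemma pourStep_bound (C : ℕ) (s : SortStep V) (Z : V → ℕ) (hZ : ∀ v, Z v ≤ C) :
    ∀ v, pourStep C s Z v ≤ C := by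
  intro v
  unfold pourStep
  have := hZ v; have := hZ (s.partner v)
  split_ifs <;> omega

lemma pourStep_fixed (C : ℕ) (s : SortStep V) (Z : V → ℕ) (v : V) (h : s.partner v = v) :
    pourStep C s Z v = Z v := by simp [pourStep, h]

lemma pourStep_swap (C : ℕ) (s : SortStep V) (Z : V → ℕ) (v : V) (h : s.partner v ≠ v)
    (hs : s.swapAlways v = true) : pourStep C s Z v = Z (s.partner v) := by
  simp [pourStep, h, hs]

lemma pourStep_lo (C : ℕ) (s : SortStep V) (Z : V → ℕ) (v : V) (h : s.partner v ≠ v)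
    (hs : s.swapAlways v = false) (hl : s.lo v = true) :
    pourStep C s Z v = Z v + Z (s.partner v) - C := by
  simp [pourStep, h, hs, hl]

lemma pourStep_hi (C : ℕ) (s : SortStep V) (Z : V → ℕ) (v : V) (h : s.partner v ≠ v)
    (hs : s.swapAlways v = false) (hl : s.lo v = false) :
    pourStep C s Z v = min C (Z v + Z (s.partner v)) := by
  simp [pourStep, h, hs, hl]

/-- witness construction for the backward step -/
def pourWitness (C : ℕ) (s : SortStep V) (Z β : V → ℕ) : V → ℕ := fun v =>
  if s.partner v = v then β v
  else if s.swapAlways v then β (s.partner v)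
  else if s.lo v then
    (if β v = 1 then 1 else if β (s.partner v) = 0 then 0
      else if Z v < C ∧ 1 ≤ Z (s.partner v) then 0 else 1)
  else
    (if β (s.partner v) = 1 then 1 else if β v = 0 then 0
      else if Z (s.partner v) < C ∧ 1 ≤ Z v then 1 else 0)

lemma pourWitness_fixed (C : ℕ) (s : SortStep V) (Z β : V → ℕ) (v : V)
    (h : s.partner v = v) : pourWitness C s Z β v = β v := by simp [pourWitness, h]

lemma pourWitness_swap (C : ℕ) (s : SortStep V) (Z β : V → ℕ) (v : V)
    (h : s.partner v ≠ v) (hs : s.swapAlways v = true) :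
    pourWitness C s Z β v = β (s.partner v) := by simp [pourWitness, h, hs]

lemma pourWitness_lo (C : ℕ) (s : SortStep V) (Z β : V → ℕ) (v : V)
    (h : s.partner v ≠ v) (hs : s.swapAlways v = false) (hl : s.lo v = true) :
    pourWitness C s Z β v = (if β v = 1 then 1 else if β (s.partner v) = 0 then 0
      else if Z v < C ∧ 1 ≤ Z (s.partner v) then 0 else 1) := by
  simp [pourWitness, h, hs, hl]

lemma pourWitness_hi (C : ℕ) (s : SortStep V) (Z β : V → ℕ) (v : V)
    (h : s.partner v ≠ v) (hs : s.swapAlways v = false) (hl : s.lo v = false) :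
    pourWitness C s Z β v = (if β (s.partner v) = 1 then 1 else if β v = 0 then 0
      else if Z (s.partner v) < C ∧ 1 ≤ Z v then 1 else 0) := by
  simp [pourWitness, h, hs, hl]

/-- The backward construction: one step. -/
lemma pour_keyStep (C : ℕ) (hC : 1 ≤ C) (s : SortStep V)
    (hinv : ∀ v, s.partner (s.partner v) = v)
    (hsw : ∀ v, s.partner v ≠ v → s.swapAlways v = s.swapAlways (s.partner v))
    (hlo : ∀ v, s.partner v ≠ v → s.swapAlways v = false → s.lo v = !s.lo (s.partner v))
    (Z : V → ℕ) (hZ : ∀ v, Z v ≤ C)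
    (β : V → ℕ) (hβ : ∀ v, β v ≤ 1)
    (hINV : ∀ v, (β v = 1 → 1 ≤ pourStep C s Z v) ∧ (β v = 0 → pourStep C s Z v < C)) :
    (∀ v, pourWitness C s Z β v ≤ 1) ∧
      (∀ v, (pourWitness C s Z β v = 1 → 1 ≤ Z v) ∧ (pourWitness C s Z β v = 0 → Z v < C)) ∧
      s.apply (pourWitness C s Z β) = β := by
  classical
  refine ⟨?_, ?_, ?_⟩
  · intro v
    unfold pourWitness
    split_ifs <;> first | exact hβ v | exact hβ _ | omega
  · intro v
    by_cases h : s.partner v = v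
    · rw [pourWitness_fixed C s Z β v h]
      have := hINV v
      rw [pourStep_fixed C s Z v h] at this
      exact this
    · have hp : s.partner (s.partner v) ≠ s.partner v := by
        rw [hinv v]; exact fun he => h he.symm
      by_cases hs : s.swapAlways v = true
      · rw [pourWitness_swap C s Z β v h hs]
        have hs2 : s.swapAlways (s.partner v) = true := (hsw v h) ▸ hs
        have := hINV (s.partner v)
        rw [pourStep_swap C s Z _ hp hs2, hinv v] at this
        exact this
      · have hs' : s.swapAlways v = false := by simpa using hs
        have hs2 : s.swapAlways (s.partner v) = false := (hsw v h) ▸ hs'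
        have hl := hlo v h hs'
        have hβv := hβ v
        have hβp := hβ (s.partner v)
        have hZv := hZ v
        have hZp := hZ (s.partner v)
        by_cases hl1 : s.lo v = true
        · have hl2 : s.lo (s.partner v) = false := by
            rw [hl1] at hl; simpa using hl.symm
          have hIv := (hINV v)
          have hIp := (hINV (s.partner v))
          rw [pourStep_lo C s Z v h hs' hl1] at hIv
          rw [pourStep_hi C s Z _ hp hs2 hl2, hinv v] at hIp
          rw [pourWitness_lo C s Z β v h hs' hl1]
          obtain ⟨hIv1, hIv2⟩ := hIv
          obtain ⟨hIp1, hIp2⟩ := hIp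
          constructor <;> intro h' <;> split_ifs at h' <;> omega
        · have hl1' : s.lo v = false := by simpa using hl1
          have hl2 : s.lo (s.partner v) = true := by
            rw [hl1'] at hl; simpa using hl.symm
          have hIv := (hINV v)
          have hIp := (hINV (s.partner v))
          rw [pourStep_hi C s Z v h hs' hl1'] at hIv
          rw [pourStep_lo C s Z _ hp hs2 hl2, hinv v] at hIp
          rw [pourWitness_hi C s Z β v h hs' hl1']
          obtain ⟨hIv1, hIv2⟩ := hIv
          obtain ⟨hIp1, hIp2⟩ := hIp
          constructor <;> intro h' <;> split_ifs at h' <;> omega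
  · funext v
    by_cases h : s.partner v = v
    · rw [SortStep.apply_fixed _ _ _ h, pourWitness_fixed C s Z β v h]
    · have hp : s.partner (s.partner v) ≠ s.partner v := by
        rw [hinv v]; exact fun he => h he.symm
      by_cases hs : s.swapAlways v = true
      · have hs2 : s.swapAlways (s.partner v) = true := (hsw v h) ▸ hs
        rw [SortStep.apply_eval_swap _ _ _ h hs, pourWitness_swap C s Z β _ hp hs2, hinv v]
      · have hs' : s.swapAlways v = false := by simpa using hs
        have hs2 : s.swapAlways (s.partner v) = false := (hsw v h) ▸ hs'
        have hl := hlo v h hs'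
        have hβv := hβ v
        have hβp := hβ (s.partner v)
        have hZv := hZ v
        have hZp := hZ (s.partner v)
        by_cases hl1 : s.lo v = true
        · have hl2 : s.lo (s.partner v) = false := by
            rw [hl1] at hl; simpa using hl.symm
          have hIv := (hINV v)
          have hIp := (hINV (s.partner v))
          rw [pourStep_lo C s Z v h hs' hl1] at hIv
          rw [pourStep_hi C s Z _ hp hs2 hl2, hinv v] at hIp
          rw [SortStep.apply_eval_min _ _ _ h hs' hl1,
            pourWitness_lo C s Z β v h hs' hl1,
            pourWitness_hi C s Z β _ hp hs2 hl2, hinv v]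
          obtain ⟨hIv1, hIv2⟩ := hIv
          obtain ⟨hIp1, hIp2⟩ := hIp
          split_ifs <;> omega
        · have hl1' : s.lo v = false := by simpa using hl1
          have hl2 : s.lo (s.partner v) = true := by
            rw [hl1'] at hl; simpa using hl.symm
          have hIv := (hINV v)
          have hIp := (hINV (s.partner v))
          rw [pourStep_hi C s Z v h hs' hl1'] at hIv
          rw [pourStep_lo C s Z _ hp hs2 hl2, hinv v] at hIp
          rw [SortStep.apply_eval_max _ _ _ h hs' hl1',
            pourWitness_hi C s Z β v h hs' hl1',
            pourWitness_lo C s Z β _ hp hs2 hl2, hinv v]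
          obtain ⟨hIv1, hIv2⟩ := hIv
          obtain ⟨hIp1, hIp2⟩ := hIp
          split_ifs <;> omega

end Pour

section PourRun

variable {V : Type*} [DecidableEq V]

lemma pourRun_bound (C : ℕ) :
    ∀ L : List (SortStep V), ∀ Z : V → ℕ, (∀ v, Z v ≤ C) → ∀ v, pourRun C L Z v ≤ C := by
  intro L
  induction L with
  | nil => exact fun Z hZ => hZ
  | cons s L ih =>
    intro Z hZ
    rw [pourRun_cons]
    exact ih _ (pourStep_bound C s Z hZ)

lemma pour_keyRun (C : ℕ) (hC : 1 ≤ C) :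
    ∀ L : List (SortStep V),
    (∀ s ∈ L, (∀ v, s.partner (s.partner v) = v) ∧
      (∀ v, s.partner v ≠ v → s.swapAlways v = s.swapAlways (s.partner v)) ∧
      (∀ v, s.partner v ≠ v → s.swapAlways v = false → s.lo v = !s.lo (s.partner v))) →
    ∀ Z : V → ℕ, (∀ v, Z v ≤ C) →
    ∀ β : V → ℕ, (∀ v, β v ≤ 1) →
    (∀ v, (β v = 1 → 1 ≤ pourRun C L Z v) ∧ (β v = 0 → pourRun C L Z v < C)) →
    ∃ b : V → ℕ, (∀ v, b v ≤ 1) ∧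
      (∀ v, (b v = 1 → 1 ≤ Z v) ∧ (b v = 0 → Z v < C)) ∧
      applyNetwork L b = β := by
  intro L
  induction L with
  | nil =>
    intro _ Z hZ β hβ hINV
    exact ⟨β, hβ, hINV, rfl⟩
  | cons s L ih =>
    intro hL Z hZ β hβ hINV
    rw [pourRun_cons] at hINV
    obtain ⟨h1, h2, h3⟩ := hL s (List.mem_cons_self)
    obtain ⟨b1, hb1, hI1, happ⟩ := ih (fun t ht => hL t (List.mem_cons_of_mem _ ht))
      (pourStep C s Z) (pourStep_bound C s Z hZ) β hβ hINV
    obtain ⟨hw1, hw2, hw3⟩ := pour_keyStep C hC s h1 h2 h3 Z hZ b1 hb1 hI1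
    exact ⟨pourWitness C s Z b1, hw1, hw2, by rw [applyNetwork_cons, hw3, happ]⟩

/-- main abstract lemma: the pour run of a sorting network is top-packed -/
lemma pour_topPacked (C : ℕ) (hC : 1 ≤ C) (G : SimpleGraph V) (M : List (SortStep V))
    (rk : V → ℕ) (hM : IsSortingNetwork G M rk)
    (Z : V → ℕ) (hZ : ∀ v, Z v ≤ C) {u w : V} (huw : rk u < rk w) :
    pourRun C M Z u = 0 ∨ pourRun C M Z w = C := by
  by_contra hcon
  push_neg at hcon
  obtain ⟨hu, hw⟩ := hcon
  have hbd : ∀ v, pourRun C M Z v ≤ C := pourRun_bound C M Z hZ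
  have hneq : u ≠ w := fun he => (lt_irrefl _ (he ▸ huw))
  set β : V → ℕ := fun v =>
    if v = w then 0 else if v = u then 1
    else if 1 ≤ pourRun C M Z v then 1 else 0 with hβdef
  have hβ1 : ∀ v, β v ≤ 1 := by
    intro v; simp only [hβdef]; split_ifs <;> omega
  have hINV : ∀ v, (β v = 1 → 1 ≤ pourRun C M Z v) ∧ (β v = 0 → pourRun C M Z v < C) := by
    intro v
    have hbdv := hbd v
    by_cases hvw : v = w
    · subst hvw
      have hv : β v = 0 := by simp [hβdef]
      rw [hv]
      constructor <;> intro h' <;> omega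
    · by_cases hvu : v = u
      · subst hvu
        have hv : β v = 1 := by simp [hβdef, hvw]
        rw [hv]
        constructor <;> intro h' <;> omega
      · have hv : β v = if 1 ≤ pourRun C M Z v then 1 else 0 := by
          simp [hβdef, hvw, hvu]
        rw [hv]
        constructor <;> intro h' <;> split_ifs at h' <;> omega
  have hprop : ∀ s ∈ M, (∀ v, s.partner (s.partner v) = v) ∧
      (∀ v, s.partner v ≠ v → s.swapAlways v = s.swapAlways (s.partner v)) ∧
      (∀ v, s.partner v ≠ v → s.swapAlways v = false → s.lo v = !s.lo (s.partner v)) := by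
    intro s hs
    obtain ⟨w1, _, w3, w4⟩ := hM.2.1 s hs
    exact ⟨w1, w3, w4⟩
  obtain ⟨b, hb, _, happ⟩ := pour_keyRun C hC M hprop Z hZ β hβ1 hINV
  have hsorted := hM.2.2 b u w (le_of_lt huw)
  rw [happ] at hsorted
  have h1 : β u = 1 := by simp [hβdef, hneq]
  have h2 : β w = 0 := by simp [hβdef]
  rw [h1, h2] at hsorted
  omega

end PourRun

section Existence

variable {V : Type*} [DecidableEq V]

/-- adjacency within a vertex set -/
def relOn (G : SimpleGraph V) (S : Finset V) : V → V → Prop :=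
  fun a b => G.Adj a b ∧ a ∈ S ∧ b ∈ S

/-- reachability within a vertex set -/
def reachOn (G : SimpleGraph V) (S : Finset V) : V → V → Prop :=
  Relation.ReflTransGen (relOn G S)

lemma relOn_symm (G : SimpleGraph V) (S : Finset V) : Symmetric (relOn G S) :=
  fun _ _ h => ⟨h.1.symm, h.2.2, h.2.1⟩

lemma reachOn_symm (G : SimpleGraph V) (S : Finset V) {a b : V}
    (h : reachOn G S a b) : reachOn G S b a :=
  by haveI : Std.Symm (relOn G S) := ⟨fun x y hxy => relOn_symm G S hxy⟩; exact Relation.ReflTransGen.symmetric.symm _ _ h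

/-- walks of given length within a set -/
def reachN (G : SimpleGraph V) (S : Finset V) (u : V) : ℕ → V → Prop
  | 0, v => u = v
  | (n+1), v => ∃ z, reachN G S u n z ∧ G.Adj z v ∧ z ∈ S ∧ v ∈ S

lemma reachOn_exists_reachN (G : SimpleGraph V) (S : Finset V) {u v : V}
    (h : reachOn G S u v) : ∃ n, reachN G S u n v := by
  induction h with
  | refl => exact ⟨0, rfl⟩
  | tail _ hrel ih =>
    obtain ⟨n, hn⟩ := ih
    exact ⟨n + 1, _, hn, hrel.1, hrel.2.1, hrel.2.2⟩

/-- a connected set has a non-cut vertex -/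
lemma exists_noncut (G : SimpleGraph V) (S : Finset V) (hcard : 2 ≤ S.card)
    (hconn : ∀ a ∈ S, ∀ b ∈ S, reachOn G S a b) :
    ∃ v ∈ S, ∀ a ∈ S.erase v, ∀ b ∈ S.erase v, reachOn G (S.erase v) a b := by
  classical
  have hne : S.Nonempty := Finset.card_pos.1 (by omega)
  obtain ⟨u0, hu0⟩ := id hne
  have hex : ∀ v ∈ S, ∃ n, reachN G S u0 n v :=
    fun v hv => reachOn_exists_reachN G S (hconn u0 hu0 v hv)
  set d : V → ℕ := fun v => if hv : v ∈ S then Nat.find (hex v hv) else 0 with hd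
  have hdspec : ∀ v (hv : v ∈ S), reachN G S u0 (d v) v := by
    intro v hv
    simp only [hd, dif_pos hv]
    exact Nat.find_spec (hex v hv)
  have hdmin : ∀ v (hv : v ∈ S), ∀ m, reachN G S u0 m v → d v ≤ m := by
    intro v hv m hm
    simp only [hd, dif_pos hv]
    exact Nat.find_le hm
  obtain ⟨vm, hvm, hmax⟩ := S.exists_max_image d hne
  have hd0 : d u0 = 0 := le_antisymm (hdmin u0 hu0 0 rfl) (Nat.zero_le _)
  -- u0 ≠ vm
  have hcard1 : 1 < S.card := by omega
  obtain ⟨w1, hw1S, hw1ne⟩ := Finset.exists_mem_ne hcard1 u0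
  have hdw1 : 1 ≤ d w1 := by
    rcases Nat.eq_zero_or_pos (d w1) with h0 | h1
    · exfalso
      have := hdspec w1 hw1S
      rw [h0] at this
      exact hw1ne this.symm
    · exact h1
  have hu0vm : u0 ≠ vm := by
    intro he
    have h1 := hmax w1 hw1S
    rw [← he, hd0] at h1
    omega
  refine ⟨vm, hvm, ?_⟩
  -- main claim by strong induction on distance
  have main : ∀ n, ∀ w ∈ S, w ≠ vm → d w = n → reachOn G (S.erase vm) u0 w := by
    intro n
    induction n using Nat.strong_induction_on with
    | _ n ih =>
      intro w hwS hwne hdw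
      match n, hdw with
      | 0, hdw =>
        have hr := hdspec w hwS
        rw [hdw] at hr
        have h0 : u0 = w := hr
        rw [← h0]
        exact Relation.ReflTransGen.refl
      | (m+1), hdw =>
        have hr := hdspec w hwS
        rw [hdw] at hr
        obtain ⟨z, hz, hadj, hzS, hwS'⟩ := hr
        have hdz : d z ≤ m := hdmin z hzS m hz
        have hzvm : z ≠ vm := by
          intro he
          have := hmax w hwS
          rw [← he] at this
          omega
        have hreach := ih (d z) (by omega) z hzS hzvm rfl
        exact hreach.tail ⟨hadj, Finset.mem_erase.2 ⟨hzvm, hzS⟩,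
          Finset.mem_erase.2 ⟨hwne, hwS'⟩⟩
  intro a ha b hb
  rw [Finset.mem_erase] at ha hb
  have hra : reachOn G (S.erase vm) u0 a := by
    rcases eq_or_ne u0 a with he | hne'
    · rw [he]; exact Relation.ReflTransGen.refl
    · exact main (d a) a ha.2 ha.1 rfl
  have hrb : reachOn G (S.erase vm) u0 b := by
    rcases eq_or_ne u0 b with he | hne'
    · rw [he]; exact Relation.ReflTransGen.refl
    · exact main (d b) b hb.2 hb.1 rfl
  
  exact (reachOn_symm G _ hra).trans hrb

/-- explicit paths -/
inductive Chain2 (r : V → V → Prop) : V → List V → V → Prop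
  | nil (a : V) : Chain2 r a [] a
  | cons {a b c : V} {l : List V} : r a b → Chain2 r b l c → Chain2 r a (b :: l) c

lemma Chain2.append {r : V → V → Prop} {a b c : V} {l1 l2 : List V}
    (h1 : Chain2 r a l1 b) (h2 : Chain2 r b l2 c) : Chain2 r a (l1 ++ l2) c := by
  induction h1 with
  | nil => exact h2
  | cons hr _ ih => exact Chain2.cons hr (ih h2)

lemma reachOn_chain2 (G : SimpleGraph V) (S : Finset V) {a b : V} (h : reachOn G S a b) :
    ∃ l, Chain2 (relOn G S) a l b := by
  induction h with
  | refl => exact ⟨[], Chain2.nil a⟩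
  | tail _ hrel ih =>
    obtain ⟨l, hl⟩ := ih
    exact ⟨l ++ [_], hl.append (Chain2.cons hrel (Chain2.nil _))⟩

lemma Chain2.mem_S {G : SimpleGraph V} {S : Finset V} {a b : V} {l : List V}
    (h : Chain2 (relOn G S) a l b) (ha : a ∈ S) : ∀ x ∈ a :: l, x ∈ S := by
  induction h with
  | nil => intro x hx; rw [List.mem_singleton] at hx; rw [hx]; exact ha
  | cons hr htail ih =>
    intro x hx
    rw [List.mem_cons] at hx
    rcases hx with hx | hx
    · rw [hx]; exact ha
    · exact ih hr.2.2 x hx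

/-- a path visiting all of `todo`, ending at `b` -/
lemma cover_path (G : SimpleGraph V) (S : Finset V)
    (hconn : ∀ a ∈ S, ∀ b ∈ S, reachOn G S a b) :
    ∀ (todo : List V), (∀ x ∈ todo, x ∈ S) → ∀ a ∈ S, ∀ b ∈ S,
    ∃ l, Chain2 (relOn G S) a l b ∧ ∀ x ∈ todo, x ∈ a :: l := by
  intro todo
  induction todo with
  | nil =>
    intro _ a ha b hb
    obtain ⟨l, hl⟩ := reachOn_chain2 G S (hconn a ha b hb)
    exact ⟨l, hl, fun x hx => absurd hx List.not_mem_nil⟩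
  | cons t todo ih =>
    intro htodo a ha b hb
    have htS : t ∈ S := htodo t (List.mem_cons_self)
    obtain ⟨l1, hl1⟩ := reachOn_chain2 G S (hconn a ha t htS)
    obtain ⟨l2, hl2, hcov⟩ := ih (fun x hx => htodo x (List.mem_cons_of_mem _ hx)) t htS b hb
    refine ⟨l1 ++ l2, hl1.append hl2, ?_⟩
    intro x hx
    rw [List.mem_cons] at hx
    rcases hx with hx | hx
    · subst hx
      -- t is the endpoint of l1-chain, so t ∈ a :: l1 ⊆ a :: (l1 ++ l2)
      have : ∀ {u w : V} {l : List V}, Chain2 (relOn G S) u l w → w ∈ u :: l := by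
        intro u w l h
        induction h with
        | nil => exact List.mem_singleton.2 rfl
        | cons _ _ ih2 => exact List.mem_cons_of_mem _ ih2
      have ht1 : x ∈ a :: l1 := this hl1
      rw [List.mem_cons] at ht1
      rcases ht1 with h | h
      · rw [h]; exact List.mem_cons_self
      · exact List.mem_cons_of_mem _ (List.mem_append_left _ h)
    · have := hcov x hx
      rw [List.mem_cons] at this
      rcases this with h | h
      · rw [h]
        -- t ∈ a :: l1
        have ht1 : ∀ {u w : V} {l : List V}, Chain2 (relOn G S) u l w → w ∈ u :: l := by
          intro u w l h'
          induction h' with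
          | nil => exact List.mem_singleton.2 rfl
          | cons _ _ ih2 => exact List.mem_cons_of_mem _ ih2
        have := ht1 hl1
        rw [List.mem_cons] at this
        rcases this with h' | h'
        · rw [h']; exact List.mem_cons_self
        · exact List.mem_cons_of_mem _ (List.mem_append_left _ h')
      · exact List.mem_cons_of_mem _ (List.mem_append_right _ h)

/-- a single comparator on the edge (p,q), p receives the min -/
def cmpStep (p q : V) : SortStep V where
  partner := fun z => if z = p then q else if z = q then p else z
  swapAlways := fun _ => false
  lo := fun z => decide (z = p)

lemma cmpStep_partner_left {p q : V} : (cmpStep p q).partner p = q := by simp [cmpStep]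

lemma cmpStep_partner_right {p q : V} (hne : p ≠ q) : (cmpStep p q).partner q = p := by
  simp [cmpStep, hne.symm]

lemma cmpStep_partner_other {p q z : V} (hzp : z ≠ p) (hzq : z ≠ q) :
    (cmpStep p q).partner z = z := by simp [cmpStep, hzp, hzq]

lemma cmpStep_wf (G : SimpleGraph V) (p q : V) (h : G.Adj p q) : (cmpStep p q).WF G := by
  have hne : p ≠ q := G.ne_of_adj h
  refine ⟨?_, ?_, ?_, ?_⟩
  · intro v
    by_cases h1 : v = p
    · subst h1
      rw [cmpStep_partner_left, cmpStep_partner_right hne]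
    · by_cases h2 : v = q
      · subst h2
        rw [cmpStep_partner_right hne, cmpStep_partner_left]
      · rw [cmpStep_partner_other h1 h2, cmpStep_partner_other h1 h2]
  · intro v hv
    by_cases h1 : v = p
    · subst h1
      rw [cmpStep_partner_left]
      exact h
    · by_cases h2 : v = q
      · subst h2
        rw [cmpStep_partner_right hne]
        exact h.symm
      · exact absurd (cmpStep_partner_other h1 h2) hv
  · intro _ _; rfl
  · intro v hv _
    by_cases h1 : v = p
    · subst h1
      rw [cmpStep_partner_left]
      simp [cmpStep, hne.symm]
    · by_cases h2 : v = q
      · subst h2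
        rw [cmpStep_partner_right hne]
        simp [cmpStep, hne.symm]
      · exact absurd (cmpStep_partner_other h1 h2) hv

lemma cmpStep_support (p q : V) (z : V) (hz : (cmpStep p q).partner z ≠ z) :
    z = p ∨ z = q := by
  simp only [cmpStep] at hz
  split_ifs at hz with h1 h2
  · exact Or.inl h1
  · exact Or.inr h2
  · exact absurd rfl hz

lemma cmpStep_apply_left {p q : V} (hne : p ≠ q) (x : V → ℕ) :
    (cmpStep p q).apply x p = min (x p) (x q) := by
  rw [SortStep.apply_eval_min _ _ _ (by rw [cmpStep_partner_left]; exact hne.symm) rfl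
    (by simp [cmpStep]), cmpStep_partner_left]

lemma cmpStep_apply_right {p q : V} (hne : p ≠ q) (x : V → ℕ) :
    (cmpStep p q).apply x q = max (x q) (x p) := by
  rw [SortStep.apply_eval_max _ _ _ (by rw [cmpStep_partner_right hne]; exact hne) rfl
    (by simp [cmpStep, hne.symm]), cmpStep_partner_right hne]

lemma cmpStep_apply_other {p q z : V} (hzp : z ≠ p) (hzq : z ≠ q) (x : V → ℕ) :
    (cmpStep p q).apply x z = x z := by
  apply SortStep.apply_fixed
  simp [cmpStep, hzp, hzq]

/-- the bubble network along a path -/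
def bubbleNet : V → List V → List (SortStep V)
  | _, [] => []
  | a, (b :: l) => cmpStep a b :: bubbleNet b l

lemma bubbleNet_wf (G : SimpleGraph V) (S : Finset V) :
    ∀ (l : List V) (a e : V), Chain2 (relOn G S) a l e →
    ∀ s ∈ bubbleNet a l, s.WF G := by
  intro l
  induction l with
  | nil => intro a e _ s hs; exact absurd hs List.not_mem_nil
  | cons b l ih =>
    intro a e hc s hs
    cases hc with
    | cons hr htail =>
      rw [bubbleNet] at hs
      rcases List.mem_cons.1 hs with h | h
      · rw [h]; exact cmpStep_wf G a b hr.1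
      · exact ih b e htail s h

lemma bubbleNet_support (G : SimpleGraph V) (S : Finset V) :
    ∀ (l : List V) (a e : V), Chain2 (relOn G S) a l e → a ∈ S →
    ∀ s ∈ bubbleNet a l, ∀ z, s.partner z ≠ z → z ∈ S := by
  intro l
  induction l with
  | nil => intro a e _ _ s hs; exact absurd hs List.not_mem_nil
  | cons b l ih =>
    intro a e hc ha s hs z hz
    cases hc with
    | cons hr htail =>
      rw [bubbleNet] at hs
      rcases List.mem_cons.1 hs with h | h
      · rw [h] at hz
        rcases cmpStep_support a b z hz with h' | h'
        · rw [h']; exact ha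
        · rw [h']; exact hr.2.2
      · exact ih b e htail hr.2.2 s h z hz

/-- main bubble lemma -/
lemma bubbleNet_spec (G : SimpleGraph V) (S : Finset V) :
    ∀ (l : List V) (a e : V), Chain2 (relOn G S) a l e → ∀ x : V → ℕ,
    (x a ≤ applyNetwork (bubbleNet a l) x e) ∧
    (∀ z ∈ a :: l, applyNetwork (bubbleNet a l) x z ≤ applyNetwork (bubbleNet a l) x e) ∧
    (∀ z, z ∉ a :: l → applyNetwork (bubbleNet a l) x z = x z) := by
  intro l
  induction l with
  | nil =>
    intro a e hc x
    cases hc with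
    | nil =>
      refine ⟨le_refl _, ?_, fun z _ => rfl⟩
      intro z hz
      rw [List.mem_singleton] at hz
      rw [hz]
  | cons b l ih =>
    intro a e hc x
    cases hc with
    | cons hr htail =>
      have hab : a ≠ b := G.ne_of_adj hr.1
      set x1 := (cmpStep a b).apply x with hx1
      have hrun : applyNetwork (bubbleNet a (b :: l)) x = applyNetwork (bubbleNet b l) x1 := by
        rw [bubbleNet, applyNetwork_cons]
      obtain ⟨ih1, ih2, ih3⟩ := ih b e htail x1
      rw [hrun]
      have hx1b : x1 b = max (x b) (x a) := by rw [hx1]; exact cmpStep_apply_right hab x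
      refine ⟨?_, ?_, ?_⟩
      · calc x a ≤ x1 b := by rw [hx1b]; exact le_max_right _ _
          _ ≤ _ := ih1
      · intro z hz
        rw [List.mem_cons] at hz
        rcases hz with hz | hz
        · subst hz
          by_cases hzbl : z ∈ b :: l
          · exact ih2 z hzbl
          · rw [ih3 z hzbl, hx1, cmpStep_apply_left hab x]
            calc min (x z) (x b) ≤ x z := min_le_left _ _
              _ ≤ x1 b := by rw [hx1b]; exact le_max_right _ _
              _ ≤ _ := ih1
        · exact ih2 z hz
      · intro z hz
        have hzb : z ∉ b :: l := fun h => hz (List.mem_cons_of_mem _ h)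
        have hza : z ≠ a := fun h => hz (h ▸ List.mem_cons_self)
        have hzb' : z ≠ b := fun h => hz (List.mem_cons_of_mem _ (h ▸ List.mem_cons_self))
        rw [ih3 z hzb, hx1, cmpStep_apply_other hza hzb' x]

end Existence

section ExistenceMain

variable {V : Type*} [Fintype V] [DecidableEq V]

lemma exists_net_on (G : SimpleGraph V) :
    ∀ (n : ℕ) (S : Finset V), S.card ≤ n →
    (∀ a ∈ S, ∀ b ∈ S, reachOn G S a b) →
    ∃ M : List (SortStep V), ∃ rk : V → ℕ,
      (∀ s ∈ M, s.WF G) ∧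
      (∀ s ∈ M, ∀ z, s.partner z ≠ z → z ∈ S) ∧
      Set.InjOn rk S ∧
      (∀ x : V → ℕ,
        (∀ u ∈ S, ∀ w ∈ S, rk u ≤ rk w → applyNetwork M x u ≤ applyNetwork M x w) ∧
        (∀ u, u ∉ S → applyNetwork M x u = x u)) := by
  intro n
  induction n with
  | zero =>
    intro S hcard _
    refine ⟨[], fun _ => 0, fun s hs => absurd hs List.not_mem_nil,
      fun s hs => absurd hs List.not_mem_nil, ?_, ?_⟩
    · intro a ha b hb _
      exfalso
      have : a ∈ S := ha
      have : S.Nonempty := ⟨a, this⟩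
      have := Finset.card_pos.2 this
      omega
    · intro x
      exact ⟨fun u hu w hw _ => by
        have : u = w := by
          have h1 : S.card = 0 := by omega
          rw [Finset.card_eq_zero] at h1
          subst h1
          exact absurd hu (Finset.notMem_empty u)
        rw [this], fun u _ => rfl⟩
  | succ n ih =>
    intro S hcard hconn
    by_cases hsmall : S.card ≤ 1
    · refine ⟨[], fun _ => 0, fun s hs => absurd hs List.not_mem_nil,
        fun s hs => absurd hs List.not_mem_nil, ?_, ?_⟩
      · intro a ha b hb _
        exact Finset.card_le_one.1 hsmall a ha b hb
      · intro x
        refine ⟨fun u hu w hw _ => ?_, fun u _ => rfl⟩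
        rw [Finset.card_le_one.1 hsmall u hu w hw]
    · have h2 : 2 ≤ S.card := by omega
      obtain ⟨vm, hvm, hconn'⟩ := exists_noncut G S h2 hconn
      have hcard' : (S.erase vm).card ≤ n := by
        rw [Finset.card_erase_of_mem hvm]; omega
      obtain ⟨M', rk', hWF', hsupp', hinj', hsort'⟩ := ih (S.erase vm) hcard' hconn'
      obtain ⟨p, hp, hcov⟩ := cover_path G S hconn S.toList
        (fun x hx => Finset.mem_toList.1 hx) vm hvm vm hvm
      have hallS : ∀ z ∈ S, z ∈ vm :: p := fun z hz => hcov z (Finset.mem_toList.2 hz)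
      have hpathS : ∀ z ∈ vm :: p, z ∈ S := Chain2.mem_S hp hvm
      set K := (S.erase vm).sup rk' + 1 with hK
      set rk : V → ℕ := fun v => if v = vm then K else rk' v with hrk
      have hrk_erase : ∀ u ∈ S.erase vm, rk u = rk' u := by
        intro u hu
        simp only [hrk]
        rw [if_neg (Finset.mem_erase.1 hu).1]
      have hrk_lt : ∀ u ∈ S.erase vm, rk' u < K := by
        intro u hu
        have := Finset.le_sup (f := rk') hu
        omega
      refine ⟨bubbleNet vm p ++ M', rk, ?_, ?_, ?_, ?_⟩
      · intro s hs
        rcases List.mem_append.1 hs with h | h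
        · exact bubbleNet_wf G S p vm vm hp s h
        · exact hWF' s h
      · intro s hs z hz
        rcases List.mem_append.1 hs with h | h
        · exact bubbleNet_support G S p vm vm hp hvm s h z hz
        · exact Finset.mem_of_mem_erase (hsupp' s h z hz)
      · intro a ha b hb hab
        simp only [hrk] at hab
        by_cases hav : a = vm <;> by_cases hbv : b = vm
        · rw [hav, hbv]
        · exfalso
          rw [if_pos hav, if_neg hbv] at hab
          have := hrk_lt b (Finset.mem_erase.2 ⟨hbv, hb⟩)
          omega
        · exfalso
          rw [if_neg hav, if_pos hbv] at hab
          have := hrk_lt a (Finset.mem_erase.2 ⟨hav, ha⟩)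
          omega
        · rw [if_neg hav, if_neg hbv] at hab
          exact hinj' (Finset.mem_coe.2 (Finset.mem_erase.2 ⟨hav, ha⟩))
            (Finset.mem_coe.2 (Finset.mem_erase.2 ⟨hbv, hb⟩)) hab
      · intro x
        set y := applyNetwork (bubbleNet vm p) x with hy
        have hsplit : applyNetwork (bubbleNet vm p ++ M') x = applyNetwork M' y :=
          applyNetwork_append _ _ x
        obtain ⟨hvm_le, hdom, huntch⟩ := bubbleNet_spec G S p vm vm hp x
        have hclosed : ∀ s ∈ M', ∀ z ∈ (↑(S.erase vm) : Set V), s.partner z ∈ ↑(S.erase vm) := by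
          intro s hs z hz
          by_cases hpz : s.partner z = z
          · rw [hpz]; exact hz
          · have hinv := (hWF' s hs).1
            have : s.partner (s.partner z) ≠ s.partner z := by
              rw [hinv z]; exact fun he => hpz he.symm
            exact Finset.mem_coe.2 (hsupp' s hs (s.partner z) this)
        have hfix_vm : applyNetwork M' y vm = y vm := by
          apply applyNetwork_fixed
          intro s hs
          by_contra hne
          have := hsupp' s hs vm hne
          exact (Finset.mem_erase.1 this).1 rfl
        have hbnd : ∀ z ∈ (↑(S.erase vm) : Set V), applyNetwork M' y z ≤ y vm := by
          apply applyNetwork_bound_on M' _ (y vm) y hclosed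
          intro z hz
          exact hdom z (hallS z (Finset.mem_of_mem_erase (Finset.mem_coe.1 hz)))
        constructor
        · intro u hu w hw hle
          rw [hsplit]
          by_cases hwv : w = vm
          · by_cases huv : u = vm
            · rw [huv, hwv]
            · rw [hwv, hfix_vm]
              exact hbnd u (Finset.mem_coe.2 (Finset.mem_erase.2 ⟨huv, hu⟩))
          · by_cases huv : u = vm
            · exfalso
              have hle' : K ≤ rk' w := by simpa [hrk, huv, hwv] using hle
              have := hrk_lt w (Finset.mem_erase.2 ⟨hwv, hw⟩)
              omega
            · have h1 : rk' u ≤ rk' w := by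
                simpa [hrk, huv, hwv] using hle
              exact (hsort' y).1 u (Finset.mem_erase.2 ⟨huv, hu⟩)
                w (Finset.mem_erase.2 ⟨hwv, hw⟩) h1
        · intro u huS
          rw [hsplit]
          have h1 : applyNetwork M' y u = y u := by
            apply applyNetwork_fixed
            intro s hs
            by_contra hne
            exact huS (Finset.mem_of_mem_erase (hsupp' s hs u hne))
          rw [h1]
          apply huntch
          intro hin
          exact huS (hpathS u hin)

lemma exists_sorting_network (G : SimpleGraph V) (h : G.Connected) :
    ∃ (M : List (SortStep V)) (rk : V → ℕ), IsSortingNetwork G M rk := by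
  have hwalk : ∀ (a b : V), G.Walk a b → reachOn G Finset.univ a b := by
    intro a b p
    induction p with
    | nil => exact Relation.ReflTransGen.refl
    | cons hadj _ ih =>
      exact Relation.ReflTransGen.head ⟨hadj, Finset.mem_univ _, Finset.mem_univ _⟩ ih
  have hconn : ∀ a ∈ Finset.univ, ∀ b ∈ Finset.univ, reachOn G Finset.univ a b := by
    intro a _ b _
    obtain ⟨p⟩ := h.preconnected a b
    exact hwalk a b p
  obtain ⟨M, rk, hWF, _, hinj, hsort⟩ :=
    exists_net_on G (Fintype.card V) Finset.univ (by rw [Finset.card_univ]) hconn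
  refine ⟨M, rk, ?_, hWF, ?_⟩
  · intro a b hab
    exact hinj (Finset.mem_coe.2 (Finset.mem_univ a)) (Finset.mem_coe.2 (Finset.mem_univ b)) hab
  · intro x u v huv
    exact (hsort x).1 u (Finset.mem_univ u) v (Finset.mem_univ v) huv

end ExistenceMain

section Product

variable {V1 : Type*} {V2 : Type*} [Fintype V1] [DecidableEq V1] [Fintype V2] [DecidableEq V2]

/-- a step of the column graph acting on all columns simultaneously -/
def colStep (s : SortStep V1) : SortStep (V1 × V2) where
  partner := fun vc => (s.partner vc.1, vc.2)
  swapAlways := fun vc => s.swapAlways vc.1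
  lo := fun vc => s.lo vc.1

/-- a step of the row graph acting within all rows, with per-row direction -/
def rowStep (o : V1 → Bool) (t : SortStep V2) : SortStep (V1 × V2) where
  partner := fun vc => (vc.1, t.partner vc.2)
  swapAlways := fun vc => t.swapAlways vc.2
  lo := fun vc => if o vc.1 then t.lo vc.2 else !t.lo vc.2

def rowPhase (o : V1 → Bool) (M2 : List (SortStep V2)) : List (SortStep (V1 × V2)) :=
  M2.map (rowStep o)

/-- the orientation pattern appropriate before the column step `s`:
lo rows ascend, hi rows descend -/
def orient (s : SortStep V1) : V1 → Bool :=
  fun v => decide (s.partner v = v) || s.swapAlways v || s.lo v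

/-- the product network -/
def prodNet (M2 : List (SortStep V2)) : List (SortStep V1) → List (SortStep (V1 × V2))
  | [] => rowPhase (fun _ => true) M2
  | s :: L => rowPhase (orient s) M2 ++ (colStep s :: prodNet M2 L)

lemma prodNet_length (M2 : List (SortStep V2)) (L : List (SortStep V1)) :
    (prodNet M2 L).length = L.length * M2.length + L.length + M2.length := by
  induction L with
  | nil => simp [prodNet, rowPhase]
  | cons s L ih =>
    simp only [prodNet, List.length_append, List.length_cons, ih, rowPhase,
      List.length_map]
    ring

variable (G1 : SimpleGraph V1) (G2 : SimpleGraph V2)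

lemma colStep_partner_eq_iff (s : SortStep V1) (v : V1) (c : V2) :
    (colStep s).partner (v, c) = (v, c) ↔ s.partner v = v := by
  simp [colStep, Prod.ext_iff]

lemma colStep_wf (s : SortStep V1) (h : s.WF G1) : (colStep s).WF (G1.boxProd G2) := by
  obtain ⟨h1, h2, h3, h4⟩ := h
  refine ⟨?_, ?_, ?_, ?_⟩
  · intro vc
    simp [colStep, h1 vc.1]
  · intro vc hvc
    rw [Ne, colStep_partner_eq_iff] at hvc
    exact SimpleGraph.boxProd_adj.2 (Or.inl ⟨h2 vc.1 hvc, rfl⟩)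
  · intro vc hvc
    rw [Ne, colStep_partner_eq_iff] at hvc
    exact h3 vc.1 hvc
  · intro vc hvc hs
    rw [Ne, colStep_partner_eq_iff] at hvc
    exact h4 vc.1 hvc hs

lemma rowStep_partner_eq_iff (o : V1 → Bool) (t : SortStep V2) (v : V1) (c : V2) :
    (rowStep o t).partner (v, c) = (v, c) ↔ t.partner c = c := by
  simp [rowStep, Prod.ext_iff]

lemma rowStep_wf (o : V1 → Bool) (t : SortStep V2) (h : t.WF G2) :
    (rowStep o t).WF (G1.boxProd G2) := by
  obtain ⟨h1, h2, h3, h4⟩ := h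
  refine ⟨?_, ?_, ?_, ?_⟩
  · intro vc
    simp [rowStep, h1 vc.2]
  · intro vc hvc
    rw [Ne, rowStep_partner_eq_iff] at hvc
    exact SimpleGraph.boxProd_adj.2 (Or.inr ⟨h2 vc.2 hvc, rfl⟩)
  · intro vc hvc
    rw [Ne, rowStep_partner_eq_iff] at hvc
    exact h3 vc.2 hvc
  · intro vc hvc hs
    rw [Ne, rowStep_partner_eq_iff] at hvc
    have := h4 vc.2 hvc hs
    simp only [rowStep]
    rw [this]
    cases o vc.1 <;> simp

/-- a row step acts within each row as the step or its flip -/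
lemma rowStep_apply (o : V1 → Bool) (t : SortStep V2) (x : V1 × V2 → ℕ) (v : V1) (c : V2) :
    (rowStep o t).apply x (v, c) =
      (if o v then t else t.flip).apply (fun d => x (v, d)) c := by
  by_cases hfix : t.partner c = c
  · rw [SortStep.apply_fixed _ _ _ ((rowStep_partner_eq_iff o t v c).2 hfix)]
    by_cases ho : o v
    · rw [if_pos ho, SortStep.apply_fixed _ _ _ hfix]
    · rw [if_neg ho, SortStep.apply_fixed _ _ _ (show t.flip.partner c = c from hfix)]
  · have hfix' : (rowStep o t).partner (v, c) ≠ (v, c) := by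
      rw [Ne, rowStep_partner_eq_iff]; exact hfix
    have hpt : (rowStep o t).partner (v, c) = (v, t.partner c) := rfl
    by_cases hs : t.swapAlways c = true
    · rw [SortStep.apply_eval_swap _ _ _ hfix' (by simpa [rowStep] using hs), hpt]
      by_cases ho : o v
      · rw [if_pos ho, SortStep.apply_eval_swap _ _ _ hfix hs]
      · rw [if_neg ho, SortStep.apply_eval_swap _ _ _
          (show t.flip.partner c ≠ c from hfix) (by simpa [SortStep.flip] using hs)]
        rfl
    · have hs' : t.swapAlways c = false := by simpa using hs
      by_cases ho : o v
      · by_cases hl : t.lo c = true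
        · rw [SortStep.apply_eval_min _ _ _ hfix' (by simpa [rowStep] using hs')
            (by simp [rowStep, ho, hl]), hpt, if_pos ho,
            SortStep.apply_eval_min _ _ _ hfix hs' hl]
        · have hl' : t.lo c = false := by simpa using hl
          rw [SortStep.apply_eval_max _ _ _ hfix' (by simpa [rowStep] using hs')
            (by simp [rowStep, ho, hl']), hpt, if_pos ho,
            SortStep.apply_eval_max _ _ _ hfix hs' hl']
      · by_cases hl : t.lo c = true
        · rw [SortStep.apply_eval_max _ _ _ hfix' (by simpa [rowStep] using hs')
            (by simp [rowStep, ho, hl]), hpt, if_neg ho,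
            SortStep.apply_eval_max _ _ _ (show t.flip.partner c ≠ c from hfix)
              (by simpa [SortStep.flip] using hs') (by simp [SortStep.flip, hl])]
          rfl
        · have hl' : t.lo c = false := by simpa using hl
          rw [SortStep.apply_eval_min _ _ _ hfix' (by simpa [rowStep] using hs')
            (by simp [rowStep, ho, hl']), hpt, if_neg ho,
            SortStep.apply_eval_min _ _ _ (show t.flip.partner c ≠ c from hfix)
              (by simpa [SortStep.flip] using hs') (by simp [SortStep.flip, hl'])]
          rfl

lemma rowPhase_apply (o : V1 → Bool) (M2 : List (SortStep V2)) :
    ∀ (x : V1 × V2 → ℕ) (v : V1) (c : V2),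
    applyNetwork (rowPhase o M2) x (v, c) =
      applyNetwork (if o v then M2 else M2.map SortStep.flip) (fun d => x (v, d)) c := by
  induction M2 with
  | nil =>
    intro x v c
    by_cases ho : o v <;> simp [ho, rowPhase, applyNetwork]
  | cons t M2 ih =>
    intro x v c
    have hstep : applyNetwork (rowPhase o (t :: M2)) x
        = applyNetwork (rowPhase o M2) ((rowStep o t).apply x) := by
      rw [rowPhase, List.map_cons, applyNetwork_cons]; rfl
    rw [hstep, ih]
    by_cases ho : o v
    · rw [if_pos ho, if_pos ho, applyNetwork_cons]
      congr 1
      funext d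
      rw [rowStep_apply, if_pos ho]
    · rw [if_neg ho, if_neg ho, List.map_cons, applyNetwork_cons]
      congr 1
      funext d
      rw [rowStep_apply, if_neg ho]

end Product

section ProductCorrect

variable {V1 : Type*} {V2 : Type*} [Fintype V1] [DecidableEq V1] [Fintype V2] [DecidableEq V2]

lemma applyNetwork_sum {V : Type*} [Fintype V] [DecidableEq V] {G : SimpleGraph V} :
    ∀ M : List (SortStep V), (∀ s ∈ M, s.WF G) → ∀ x : V → ℕ,
    ∑ v, applyNetwork M x v = ∑ v, x v := by
  intro M
  induction M with
  | nil => intro _ x; rfl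
  | cons s M ih =>
    intro hM x
    obtain ⟨h1, _, h3, h4⟩ := hM s (List.mem_cons_self)
    rw [applyNetwork_cons, ih (fun t ht => hM t (List.mem_cons_of_mem _ ht)),
      s.sum_apply h1 h3 h4 Finset.univ (fun v _ => Finset.mem_univ _)]

def rowCount (x : V1 × V2 → ℕ) (v : V1) : ℕ := ∑ c, x (v, c)

lemma rowCount_le (x : V1 × V2 → ℕ) (hx : ∀ p, x p ≤ 1) (v : V1) :
    rowCount x v ≤ Fintype.card V2 := by
  unfold rowCount
  calc ∑ c, x (v, c) ≤ ∑ _c : V2, 1 := Finset.sum_le_sum (fun c _ => hx (v, c))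
    _ = Fintype.card V2 := by simp

variable (G1 : SimpleGraph V1) (G2 : SimpleGraph V2)
variable (M2 : List (SortStep V2)) (rk2 : V2 → ℕ)

lemma rowPhase_sorted (hrk2 : Function.Injective rk2) (hM2 : IsSortingNetwork G2 M2 rk2)
    (o : V1 → Bool) (x : V1 × V2 → ℕ) (hx : ∀ p, x p ≤ 1) (v : V1) (c : V2) :
    applyNetwork (rowPhase o M2) x (v, c) =
      if o v then pat rk2 (rowCount x v) c else dpat rk2 (rowCount x v) c := by
  rw [rowPhase_apply]
  by_cases ho : o v
  · rw [if_pos ho, if_pos ho]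
    have hy1 : ∀ d, applyNetwork M2 (fun d => x (v, d)) d ≤ 1 :=
      applyNetwork_bound M2 _ 1 (fun d => hx _)
    have hsum : ∑ d, applyNetwork M2 (fun d => x (v, d)) d = rowCount x v :=
      applyNetwork_sum (G := G2) M2 hM2.2.1 _
    have := sorted01_eq_pat rk2 (applyNetwork M2 (fun d => x (v, d))) hy1
      (fun a b hab => hM2.2.2 _ a b hab) c
    rw [this, hsum]
  · rw [if_neg ho, if_neg ho]
    rw [flipList_apply01 M2 _ (fun d => hx _)]
    change 1 - applyNetwork M2 (fun d => 1 - x (v, d)) c = _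
    set w : V2 → ℕ := fun d => 1 - x (v, d) with hw
    have hw1 : ∀ d, w d ≤ 1 := fun d => by simp only [hw]; omega
    have hz1 : ∀ d, applyNetwork M2 w d ≤ 1 := applyNetwork_bound M2 _ 1 hw1
    have hzc := sorted01_eq_pat rk2 (applyNetwork M2 w) hz1
      (fun a b hab => hM2.2.2 _ a b hab) c
    have hsumz : ∑ d, applyNetwork M2 w d = ∑ d, w d := applyNetwork_sum (G := G2) M2 hM2.2.1 _
    have hsumw : ∑ d, w d + rowCount x v = Fintype.card V2 := by
      have hpt : ∀ d, w d + x (v, d) = 1 := by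
        intro d
        have := hx (v, d)
        simp only [hw]
        omega
      have : ∑ d, (w d + x (v, d)) = ∑ _d : V2, 1 := Finset.sum_congr rfl (fun d _ => hpt d)
      rw [Finset.sum_add_distrib] at this
      simpa [rowCount] using this
    have hzle : rowCount x v ≤ Fintype.card V2 := rowCount_le x hx v
    rw [hzc, hsumz]
    have hcr := crank_lt_card rk2 c
    unfold pat dpat
    split_ifs <;> omega

/-- evaluations of a column step -/
lemma colStep_eval_fixed (s : SortStep V1) (x : V1 × V2 → ℕ) (v : V1) (c : V2)
    (h : s.partner v = v) : (colStep s).apply x (v, c) = x (v, c) :=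
  SortStep.apply_fixed _ _ _ ((colStep_partner_eq_iff s v c).2 h)

lemma colStep_eval_swap (s : SortStep V1) (x : V1 × V2 → ℕ) (v : V1) (c : V2)
    (h : s.partner v ≠ v) (hs : s.swapAlways v = true) :
    (colStep s).apply x (v, c) = x (s.partner v, c) :=
  SortStep.apply_eval_swap _ _ _ (fun he => h ((colStep_partner_eq_iff s v c).1 he))
    (show s.swapAlways v = true from hs)

lemma colStep_eval_min (s : SortStep V1) (x : V1 × V2 → ℕ) (v : V1) (c : V2)
    (h : s.partner v ≠ v) (hs : s.swapAlways v = false) (hl : s.lo v = true) :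
    (colStep s).apply x (v, c) = min (x (v, c)) (x (s.partner v, c)) :=
  SortStep.apply_eval_min _ _ _ (fun he => h ((colStep_partner_eq_iff s v c).1 he))
    (show s.swapAlways v = false from hs) (show s.lo v = true from hl)

lemma colStep_eval_max (s : SortStep V1) (x : V1 × V2 → ℕ) (v : V1) (c : V2)
    (h : s.partner v ≠ v) (hs : s.swapAlways v = false) (hl : s.lo v = false) :
    (colStep s).apply x (v, c) = max (x (v, c)) (x (s.partner v, c)) :=
  SortStep.apply_eval_max _ _ _ (fun he => h ((colStep_partner_eq_iff s v c).1 he))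
    (show s.swapAlways v = false from hs) (show s.lo v = false from hl)

lemma orient_of_fixed (s : SortStep V1) (v : V1) (h : s.partner v = v) :
    orient s v = true := by simp [orient, h]

lemma orient_of_swap (s : SortStep V1) (v : V1) (h : s.swapAlways v = true) :
    orient s v = true := by simp [orient, h]

lemma orient_of_lo (s : SortStep V1) (v : V1) (h : s.lo v = true) :
    orient s v = true := by simp [orient, h]

lemma orient_of_hi (s : SortStep V1) (v : V1) (h1 : s.partner v ≠ v)
    (h2 : s.swapAlways v = false) (h3 : s.lo v = false) : orient s v = false := by
  simp [orient, h1, h2, h3]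

lemma prodNet_wf (hM2 : ∀ t ∈ M2, t.WF G2) :
    ∀ L : List (SortStep V1), (∀ s ∈ L, s.WF G1) →
    ∀ s' ∈ prodNet M2 L, s'.WF (G1.boxProd G2) := by
  intro L
  induction L with
  | nil =>
    intro _ s' hs'
    rw [prodNet, rowPhase] at hs'
    obtain ⟨t, ht, rfl⟩ := List.mem_map.1 hs'
    exact rowStep_wf G1 G2 _ t (hM2 t ht)
  | cons s L ih =>
    intro hL s' hs'
    rw [prodNet] at hs'
    rcases List.mem_append.1 hs' with h | h
    · rw [rowPhase] at h
      obtain ⟨t, ht, rfl⟩ := List.mem_map.1 h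
      exact rowStep_wf G1 G2 _ t (hM2 t ht)
    · rcases List.mem_cons.1 h with h' | h'
      · rw [h']
        exact colStep_wf G1 G2 s (hL s (List.mem_cons_self))
      · exact ih (fun t ht => hL t (List.mem_cons_of_mem _ ht)) s' h'

/-- the key correctness statement of the product network on 0-1 inputs -/
lemma prodNet_correct (hrk2 : Function.Injective rk2) (hM2 : IsSortingNetwork G2 M2 rk2) :
    ∀ L : List (SortStep V1), (∀ s ∈ L, s.WF G1) →
    ∀ x : V1 × V2 → ℕ, (∀ p, x p ≤ 1) → ∀ v c,
    applyNetwork (prodNet M2 L) x (v, c)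
      = pat rk2 (pourRun (Fintype.card V2) L (fun u => rowCount x u) v) c := by
  intro L
  induction L with
  | nil =>
    intro _ x hx v c
    rw [prodNet]
    rw [rowPhase_sorted G2 M2 rk2 hrk2 hM2 (fun _ => true) x hx v c]
    rfl
  | cons s L ih =>
    intro hL x hx v c
    set C := Fintype.card V2 with hC
    set Z : V1 → ℕ := fun u => rowCount x u with hZ
    have hZC : ∀ u, Z u ≤ C := fun u => rowCount_le x hx u
    obtain ⟨w1, w2, w3, w4⟩ := hL s (List.mem_cons_self)
    set x1 := applyNetwork (rowPhase (orient s) M2) x with hx1def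
    have hx1 : ∀ p, x1 p ≤ 1 := applyNetwork_bound _ x 1 hx
    have hx1val : ∀ u d, x1 (u, d)
        = if orient s u then pat rk2 (Z u) d else dpat rk2 (Z u) d := by
      intro u d
      rw [hx1def, rowPhase_sorted G2 M2 rk2 hrk2 hM2 (orient s) x hx u d]
    have hx2 : ∀ p, (colStep s).apply x1 p ≤ 1 := SortStep.apply_bound _ x1 1 hx1
    have hrun : applyNetwork (prodNet M2 (s :: L)) x (v, c)
        = applyNetwork (prodNet M2 L) ((colStep s).apply x1) (v, c) := by
      rw [prodNet, applyNetwork_append, applyNetwork_cons]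
    rw [hrun, ih (fun t ht => hL t (List.mem_cons_of_mem _ ht)) _ hx2 v c]
    have hcount : (fun u => rowCount ((colStep s).apply x1) u) = pourStep C s Z := by
      funext u
      by_cases hf : s.partner u = u
      · rw [pourStep_fixed C s Z u hf]
        have : ∀ d, (colStep s).apply x1 (u, d) = x1 (u, d) :=
          fun d => colStep_eval_fixed s x1 u d hf
        unfold rowCount
        rw [Finset.sum_congr rfl (fun d _ => this d)]
        have horient := orient_of_fixed s u hf
        rw [Finset.sum_congr rfl (fun d _ => by rw [hx1val u d, horient, if_pos rfl])]
        exact sum_pat rk2 hrk2 (hZC u)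
      · by_cases hsw : s.swapAlways u = true
        · rw [pourStep_swap C s Z u hf hsw]
          have horient := orient_of_swap s (s.partner u) ((w3 u hf) ▸ hsw)
          unfold rowCount
          rw [Finset.sum_congr rfl (fun d _ => by
            rw [colStep_eval_swap s x1 u d hf hsw, hx1val _ d, horient, if_pos rfl])]
          exact sum_pat rk2 hrk2 (hZC _)
        · have hsw' : s.swapAlways u = false := by simpa using hsw
          have hpne : s.partner (s.partner u) ≠ s.partner u := by
            rw [w1 u]; exact fun he => hf he.symm
          have hsw2 : s.swapAlways (s.partner u) = false := (w3 u hf) ▸ hsw'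
          have hlo := w4 u hf hsw'
          by_cases hl : s.lo u = true
          · have hl2 : s.lo (s.partner u) = false := by
              rw [hl] at hlo; simpa using hlo.symm
            rw [pourStep_lo C s Z u hf hsw' hl]
            have ho1 := orient_of_lo s u hl
            have ho2 := orient_of_hi s (s.partner u) hpne hsw2 hl2
            unfold rowCount
            rw [Finset.sum_congr rfl (fun d _ => by
              rw [colStep_eval_min s x1 u d hf hsw' hl, hx1val u d, hx1val _ d,
                ho1, ho2, if_pos rfl])]
            exact sum_min_pat_dpat rk2 hrk2 (hZC u) (hZC _)
          · have hl' : s.lo u = false := by simpa using hl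
            have hl2 : s.lo (s.partner u) = true := by
              rw [hl'] at hlo; simpa using hlo.symm
            rw [pourStep_hi C s Z u hf hsw' hl']
            have ho1 := orient_of_hi s u hf hsw' hl'
            have ho2 := orient_of_lo s (s.partner u) hl2
            unfold rowCount
            rw [Finset.sum_congr rfl (fun d _ => by
              rw [colStep_eval_max s x1 u d hf hsw' hl', hx1val u d, hx1val _ d,
                ho1, ho2, if_pos rfl])]
            exact sum_max_dpat_pat rk2 hrk2 (hZC u) (hZC _)
    rw [hcount, ← pourRun_cons]

end ProductCorrect

/-- The sorting number of the Cartesian (box) product satisfies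
`st(G1 □ G2) ≤ st(G1) st(G2) + st(G1) + st(G2)`. -/
theorem sortingNumber_boxProd
    {V1 V2 : Type*} [Fintype V1] [DecidableEq V1] [Fintype V2] [DecidableEq V2]
    (G1 : SimpleGraph V1) (G2 : SimpleGraph V2)
    (h1 : G1.Connected) (h2 : G2.Connected) :
    sortingNumber (G1.boxProd G2) ≤
      sortingNumber G1 * sortingNumber G2 + sortingNumber G1 + sortingNumber G2 := by
  classical
  have hS1 : ({k | ∃ (M : List (SortStep V1)) (rk : V1 → ℕ),
      M.length = k ∧ IsSortingNetwork G1 M rk}).Nonempty := by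
    obtain ⟨M, rk, h⟩ := exists_sorting_network G1 h1
    exact ⟨M.length, M, rk, rfl, h⟩
  have hS2 : ({k | ∃ (M : List (SortStep V2)) (rk : V2 → ℕ),
      M.length = k ∧ IsSortingNetwork G2 M rk}).Nonempty := by
    obtain ⟨M, rk, h⟩ := exists_sorting_network G2 h2
    exact ⟨M.length, M, rk, rfl, h⟩
  obtain ⟨M1, rk1, hlen1, hM1⟩ := Nat.sInf_mem hS1
  obtain ⟨M2, rk2, hlen2, hM2⟩ := Nat.sInf_mem hS2
  have hC : 1 ≤ Fintype.card V2 := Fintype.card_pos_iff.2 h2.nonempty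
  have hcrank_lt : ∀ c : V2, crank rk2 c < Fintype.card V2 := crank_lt_card rk2
  -- the target rank on the product: lexicographic
  set rk : V1 × V2 → ℕ := fun p => rk1 p.1 * Fintype.card V2 + crank rk2 p.2 with hrkdef
  have hlex : ∀ a b r q : ℕ, r < Fintype.card V2 → q < Fintype.card V2 →
      a * Fintype.card V2 + r ≤ b * Fintype.card V2 + q → a ≤ b := by
    intro a b r q hr hq h
    by_contra hab
    push_neg at hab
    have h3 : (b + 1) * Fintype.card V2 ≤ a * Fintype.card V2 :=
      Nat.mul_le_mul_right _ hab
    have e : (b + 1) * Fintype.card V2 = b * Fintype.card V2 + Fintype.card V2 := by ring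
    omega
  have hinj : Function.Injective rk := by
    intro p q h
    have h' : rk1 p.1 * Fintype.card V2 + crank rk2 p.2
        = rk1 q.1 * Fintype.card V2 + crank rk2 q.2 := h
    have hab : rk1 p.1 = rk1 q.1 :=
      le_antisymm (hlex _ _ _ _ (hcrank_lt p.2) (hcrank_lt q.2) (le_of_eq h'))
        (hlex _ _ _ _ (hcrank_lt q.2) (hcrank_lt p.2) (le_of_eq h'.symm))
    have h1' : p.1 = q.1 := hM1.1 hab
    have h2' : p.2 = q.2 := by
      apply crank_inj rk2 hM2.1
      rw [hab] at h'
      omega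
    exact Prod.ext h1' h2'
  have hWF : ∀ s ∈ prodNet M2 M1, s.WF (G1.boxProd G2) :=
    prodNet_wf G1 G2 M2 hM2.2.1 M1 hM1.2.1
  have hsorted01 : ∀ x : V1 × V2 → ℕ, (∀ p, x p ≤ 1) → ∀ u w, rk u ≤ rk w →
      applyNetwork (prodNet M2 M1) x u ≤ applyNetwork (prodNet M2 M1) x w := by
    intro x hx u w huw
    obtain ⟨v, c⟩ := u
    obtain ⟨v', c'⟩ := w
    have huw' : rk1 v * Fintype.card V2 + crank rk2 c
        ≤ rk1 v' * Fintype.card V2 + crank rk2 c' := huw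
    rw [prodNet_correct G1 G2 M2 rk2 hM2.1 hM2 M1 hM1.2.1 x hx v c,
      prodNet_correct G1 G2 M2 rk2 hM2.1 hM2 M1 hM1.2.1 x hx v' c']
    have hZb : ∀ u, rowCount x u ≤ Fintype.card V2 := rowCount_le x hx
    by_cases hv : v = v'
    · subst hv
      have hcc : crank rk2 c ≤ crank rk2 c' := by omega
      unfold pat
      split_ifs <;> omega
    · have hlt : rk1 v < rk1 v' := by
        have hle : rk1 v ≤ rk1 v' :=
          hlex _ _ _ _ (hcrank_lt c) (hcrank_lt c') huw'
        rcases lt_or_eq_of_le hle with h' | h'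
        · exact h'
        · exact absurd (hM1.1 h') hv
      rcases pour_topPacked (Fintype.card V2) hC G1 M1 rk1 hM1
        (fun u => rowCount x u) hZb hlt with h0 | hc
      · rw [h0]
        unfold pat
        have := hcrank_lt c
        rw [if_neg (by omega)]
        exact Nat.zero_le _
      · rw [hc]
        have heq1 : pat rk2 (Fintype.card V2) c' = 1 := by
          unfold pat
          rw [if_pos (by omega)]
        rw [heq1]
        unfold pat
        split_ifs <;> omega
  have hsorted := zeroOne_principle (prodNet M2 M1) rk hsorted01
  have hmem : (sortingNumber G1 * sortingNumber G2 + sortingNumber G1 + sortingNumber G2)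
      ∈ {k | ∃ (M : List (SortStep (V1 × V2))) (rk : V1 × V2 → ℕ),
        M.length = k ∧ IsSortingNetwork (G1.boxProd G2) M rk} := by
    refine ⟨prodNet M2 M1, rk, ?_, hinj, hWF, hsorted⟩
    rw [prodNet_length, hlen1, hlen2]
    rfl
  exact Nat.sInf_le hmem
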